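/- Let 1 < q ≤ p < ∞. If g ∈ M^p_q(ℝⁿ) and f ∈ B^{p'}_{q'}(ℝⁿ), then fg is integrable and |∫_{ℝⁿ} f g dx| ≤ ‖f‖_{B^{p'}_{q'}} ‖g‖_{M^p_q}. -/

import Mathlib

open MeasureTheory ENNReal Set Filter

/-- The open axis-parallel cube with corner `a` and side length `s`. -/
noncomputable def cube (n : ℕ) (a : Fin n → ℝ) (s : ℝ) : Set (Fin n → ℝ) :=
  Set.univ.pi fun i => Set.Ioo (a i) (a i + s)

/-- The Morrey norm `‖f‖_{M^p_q}` on `ℝⁿ`. -/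
noncomputable def morreyNorm (n : ℕ) (p q : ℝ) (f : (Fin n → ℝ) → ℝ) : ℝ≥0∞ :=
  ⨆ (a : Fin n → ℝ) (s : ℝ) (_ : 0 < s),
    ENNReal.ofReal ((s ^ n) ^ (1 / p - 1 / q)) *
      (∫⁻ x in cube n a s, ENNReal.ofReal (|f x| ^ q)) ^ (1 / q)

/-- The Hölder conjugate exponent `p' = p/(p-1)`. -/
noncomputable def conjExp (p : ℝ) : ℝ := p / (p - 1)

/-- A `(p',q')`-block: a measurable function supported on a cube `Q` with
`‖b‖_{L^{q'}} ≤ |Q|^{1/p-1/q}`. -/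
def IsBlock (n : ℕ) (p q : ℝ) (b : (Fin n → ℝ) → ℝ) : Prop :=
  Measurable b ∧ ∃ (a : Fin n → ℝ) (s : ℝ), 0 < s ∧
    Function.support b ⊆ cube n a s ∧
    (∫⁻ x, ENNReal.ofReal (|b x| ^ conjExp q)) ^ (1 / conjExp q) ≤
      ENNReal.ofReal ((s ^ n) ^ (1 / p - 1 / q))

/-- `f = ∑ₖ λₖ bₖ` a.e. with absolutely convergent coefficients and `(p',q')`-blocks. -/
def IsBlockRep (n : ℕ) (p q : ℝ) (f : (Fin n → ℝ) → ℝ) (l : ℕ → ℝ)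
    (b : ℕ → (Fin n → ℝ) → ℝ) : Prop :=
  (∀ k, IsBlock n p q (b k)) ∧ Summable (fun k => |l k|) ∧
    ∀ᵐ x : Fin n → ℝ, Summable (fun k => l k * b k x) ∧ f x = ∑' k, l k * b k x

/-- Membership in the block space `B^{p'}_{q'}(ℝⁿ)`. -/
def MemBlockSpace (n : ℕ) (p q : ℝ) (f : (Fin n → ℝ) → ℝ) : Prop :=
  ∃ l b, IsBlockRep n p q f l b

/-- The block space norm `‖f‖_{B^{p'}_{q'}}`: infimal `ℓ¹`-sum of coefficients. -/
noncomputable def blockNorm (n : ℕ) (p q : ℝ) (f : (Fin n → ℝ) → ℝ) : ℝ≥0∞ :=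
  ⨅ (l : ℕ → ℝ) (b : ℕ → (Fin n → ℝ) → ℝ) (_ : IsBlockRep n p q f l b),
    ENNReal.ofReal (∑' k, |l k|)

lemma measurableSet_cube (n : ℕ) (a : Fin n → ℝ) (s : ℝ) : MeasurableSet (cube n a s) :=
  MeasurableSet.univ_pi fun _ => measurableSet_Ioo

lemma block_lintegral_le {n : ℕ} {p q : ℝ} (hq : 1 < q) {b g : (Fin n → ℝ) → ℝ}
    (hb : IsBlock n p q b) (hg : Measurable g) :
    ∫⁻ x, ENNReal.ofReal |b x * g x| ≤ morreyNorm n p q g := by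
  obtain ⟨hbm, a, s, hs, hsupp, hnorm⟩ := hb
  set Q := cube n a s with hQ
  have hQm : MeasurableSet Q := measurableSet_cube n a s
  have hq0 : 0 < q := lt_trans one_pos hq
  have hcc : (conjExp q).HolderConjugate q := (Real.HolderConjugate.conjExponent hq).symm
  have hq'0 : 0 < conjExp q := hcc.pos
  -- pointwise splitting
  have hpt : ∀ x, ENNReal.ofReal |b x * g x|
      = ENNReal.ofReal |b x| * Q.indicator (fun x => ENNReal.ofReal |g x|) x := by
    intro x
    by_cases hx : x ∈ Q
    · rw [Set.indicator_of_mem hx, abs_mul, ENNReal.ofReal_mul (abs_nonneg _)]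
    · have hbx : b x = 0 := by
        by_contra h
        exact hx (hsupp h)
      simp [hbx, Set.indicator_of_notMem hx]
  calc ∫⁻ x, ENNReal.ofReal |b x * g x|
      = ∫⁻ x, ((fun x => ENNReal.ofReal |b x|) *
          (Q.indicator fun x => ENNReal.ofReal |g x|)) x := by
        simp only [Pi.mul_apply]; exact lintegral_congr hpt
    _ ≤ (∫⁻ x, ENNReal.ofReal |b x| ^ conjExp q) ^ (1 / conjExp q) *
          (∫⁻ x, Q.indicator (fun x => ENNReal.ofReal |g x|) x ^ q) ^ (1 / q) := by
        refine ENNReal.lintegral_mul_le_Lp_mul_Lq _ hcc ?_ ?_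
        · exact (ENNReal.measurable_ofReal.comp hbm.abs).aemeasurable
        · exact ((ENNReal.measurable_ofReal.comp hg.abs).indicator hQm).aemeasurable
    _ ≤ ENNReal.ofReal ((s ^ n) ^ (1 / p - 1 / q)) *
          (∫⁻ x in Q, ENNReal.ofReal (|g x| ^ q)) ^ (1 / q) := by
        have hind : ∀ x, Q.indicator (fun x => ENNReal.ofReal |g x|) x ^ q
            = Q.indicator (fun x => ENNReal.ofReal (|g x| ^ q)) x := by
          intro x
          by_cases hx : x ∈ Q
          · simp [Set.indicator_of_mem hx,
              ENNReal.ofReal_rpow_of_nonneg (abs_nonneg _) hq0.le]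
          · simp [Set.indicator_of_notMem hx, ENNReal.zero_rpow_of_pos hq0]
        rw [lintegral_congr hind, lintegral_indicator hQm]
        have h1 : (∫⁻ x, ENNReal.ofReal |b x| ^ conjExp q) ^ (1 / conjExp q)
            ≤ ENNReal.ofReal ((s ^ n) ^ (1 / p - 1 / q)) := by
          calc (∫⁻ x, ENNReal.ofReal |b x| ^ conjExp q) ^ (1 / conjExp q)
              = (∫⁻ x, ENNReal.ofReal (|b x| ^ conjExp q)) ^ (1 / conjExp q) := by
                congr 1
                exact lintegral_congr fun x =>
                  ENNReal.ofReal_rpow_of_nonneg (abs_nonneg _) hq'0.le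
            _ ≤ _ := hnorm
        exact mul_le_mul_left h1 _
    _ ≤ morreyNorm n p q g := by
        refine le_iSup_of_le a (le_iSup_of_le s ?_)
        exact le_iSup (fun _ : 0 < s => _) hs

/-- For 1 < q ≤ p, g ∈ M^p_q and f ∈ B^{p'}_{q'}, the product fg is
integrable and |∫ fg| ≤ ‖f‖_{B^{p'}_{q'}} ‖g‖_{M^p_q}. -/
theorem stmt6 (n : ℕ) (p q : ℝ) (hq : 1 < q) (hqp : q ≤ p)
    (f g : (Fin n → ℝ) → ℝ) (hg : Measurable g)
    (hfB : MemBlockSpace n p q f) (hgM : morreyNorm n p q g < ⊤) :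
    Integrable (fun x => f x * g x) ∧
    ENNReal.ofReal |∫ x, f x * g x| ≤ blockNorm n p q f * morreyNorm n p q g := by
  set M := morreyNorm n p q g with hM
  have key : ∀ (l : ℕ → ℝ) (b : ℕ → (Fin n → ℝ) → ℝ), IsBlockRep n p q f l b →
      Integrable (fun x => f x * g x) ∧
      ENNReal.ofReal |∫ x, f x * g x| ≤ ENNReal.ofReal (∑' k, |l k|) * M := by
    rintro l b ⟨hblk, hsum, hae⟩
    have hbm : ∀ k, Measurable (b k) := fun k => (hblk k).1
    have hmeas : ∀ k, Measurable fun x => ENNReal.ofReal |l k * b k x * g x| := fun k =>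
      ENNReal.measurable_ofReal.comp (((hbm k).const_mul (l k)).mul hg).abs
    have hterm : ∀ k, ∫⁻ x, ENNReal.ofReal |l k * b k x * g x|
        = ENNReal.ofReal |l k| * ∫⁻ x, ENNReal.ofReal |b k x * g x| := by
      intro k
      have hm2 : Measurable fun x => ENNReal.ofReal |b k x * g x| :=
        (((hbm k).mul hg).abs).ennreal_ofReal
      rw [← lintegral_const_mul _ hm2]
      exact lintegral_congr fun x => by
        rw [mul_assoc, abs_mul, ENNReal.ofReal_mul (abs_nonneg _)]
    have hofsum : (∑' k, ENNReal.ofReal |l k|) = ENNReal.ofReal (∑' k, |l k|) :=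
      (ENNReal.ofReal_tsum_of_nonneg (fun k => abs_nonneg _) hsum).symm
    have hSbound : (∑' k, ∫⁻ x, ENNReal.ofReal |l k * b k x * g x|)
        ≤ ENNReal.ofReal (∑' k, |l k|) * M := by
      rw [← hofsum, ← ENNReal.tsum_mul_right]
      refine ENNReal.tsum_le_tsum fun k => ?_
      rw [hterm k]
      exact mul_le_mul_right (block_lintegral_le hq (hblk k) hg) _
    have hptb : ∀ᵐ x : Fin n → ℝ, ENNReal.ofReal |f x * g x|
        ≤ ∑' k, ENNReal.ofReal |l k * b k x * g x| := by
      filter_upwards [hae] with x hx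
      obtain ⟨hsx, hfx⟩ := hx
      have hs2 : Summable fun k => l k * b k x * g x := hsx.mul_right _
      have hs3 : Summable fun k => |l k * b k x * g x| := hs2.abs
      have heq : f x * g x = ∑' k, l k * b k x * g x := by
        rw [hfx, tsum_mul_right]
      calc ENNReal.ofReal |f x * g x| ≤ ENNReal.ofReal (∑' k, |l k * b k x * g x|) := by
            rw [heq]
            refine ENNReal.ofReal_le_ofReal ?_
            have := norm_tsum_le_tsum_norm (f := fun k => l k * b k x * g x)
              (by simpa only [Real.norm_eq_abs] using hs3)
            simpa only [Real.norm_eq_abs] using this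
        _ = ∑' k, ENNReal.ofReal |l k * b k x * g x| :=
            ENNReal.ofReal_tsum_of_nonneg (fun k => abs_nonneg _) hs3
    have hI : ∫⁻ x, ENNReal.ofReal |f x * g x| ≤ ENNReal.ofReal (∑' k, |l k|) * M := by
      calc ∫⁻ x, ENNReal.ofReal |f x * g x|
          ≤ ∫⁻ x, ∑' k, ENNReal.ofReal |l k * b k x * g x| := lintegral_mono_ae hptb
        _ = ∑' k, ∫⁻ x, ENNReal.ofReal |l k * b k x * g x| :=
            lintegral_tsum fun k => (hmeas k).aemeasurable
        _ ≤ _ := hSbound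
    have hfa : AEMeasurable f := by
      refine aemeasurable_of_tendsto_metrizable_ae atTop
        (f := fun N x => ∑ k ∈ Finset.range N, l k * b k x)
        (fun N => (Finset.measurable_sum _ fun k _ => (hbm k).const_mul (l k)).aemeasurable) ?_
      filter_upwards [hae] with x hx
      rw [hx.2]
      exact hx.1.hasSum.tendsto_sum_nat
    have hasm : AEStronglyMeasurable (fun x => f x * g x) volume :=
      (hfa.mul hg.aemeasurable).aestronglyMeasurable
    have hfin : HasFiniteIntegral (fun x => f x * g x) volume := by
      rw [hasFiniteIntegral_iff_norm]
      simp only [Real.norm_eq_abs]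
      exact lt_of_le_of_lt hI (ENNReal.mul_lt_top ENNReal.ofReal_lt_top hgM)
    have hint : Integrable (fun x => f x * g x) := ⟨hasm, hfin⟩
    refine ⟨hint, ?_⟩
    calc ENNReal.ofReal |∫ x, f x * g x| ≤ ENNReal.ofReal (∫ x, |f x * g x|) :=
          ENNReal.ofReal_le_ofReal (by
            simpa only [Real.norm_eq_abs] using norm_integral_le_integral_norm (fun x => f x * g x))
      _ = ∫⁻ x, ENNReal.ofReal |f x * g x| :=
          ofReal_integral_eq_lintegral_ofReal hint.abs (Filter.Eventually.of_forall fun x => abs_nonneg _)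
      _ ≤ _ := hI
  obtain ⟨l0, b0, hrep0⟩ := hfB
  refine ⟨(key l0 b0 hrep0).1, ?_⟩
  by_cases hM0 : M = 0
  · have h0 := (key l0 b0 hrep0).2
    rw [hM0, mul_zero] at h0 ⊢
    exact h0
  · have hMt : M ≠ ⊤ := hgM.ne
    rw [← ENNReal.div_le_iff_le_mul (Or.inl hM0) (Or.inl hMt)]
    refine le_iInf fun l => le_iInf fun b => le_iInf fun hrep => ?_
    rw [ENNReal.div_le_iff_le_mul (Or.inl hM0) (Or.inl hMt)]
    exact (key l b hrep).2
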